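/- For the (v₋,v₊)-gliders automaton F with v₋ < 0 ≤ v₊, for all j ∈ ℤ and all k ≥ 0: F^k(a)_j = +1 if and only if M_a(j - v₊k) < min over {j - v₊k + 1, ..., j - v₋k + 1} of M_a. -/

import Mathlib

open scoped Classical

/-- The (v₋,v₊)-gliders automaton on alphabet {-1,0,+1} ⊆ ℤ. -/
noncomputable def glider (vm vp : ℤ) (a : ℤ → ℤ) : ℤ → ℤ := fun j =>
  if a (j - vp) = 1 ∧ (∀ N : ℤ, N ≤ -vm → 0 ≤ ∑ t ∈ Finset.Icc (-vp + 1) N, a (j + t)) then 1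
  else if a (j - vm) = -1 ∧ (∀ N : ℤ, -vp ≤ N → (∑ t ∈ Finset.Icc N (-vm - 1), a (j + t)) ≤ 0) then -1
  else 0

lemma int_Icc_eq_Ico (p q : ℤ) : Finset.Icc p q = Finset.Ico p (q + 1) := by
  ext t
  simp only [Finset.mem_Icc, Finset.mem_Ico]
  omega

lemma sum_Ico_eq (f S : ℤ → ℤ) (hS : ∀ k, S (k + 1) = S k + f k) :
    ∀ {p q : ℤ}, p ≤ q → ∑ t ∈ Finset.Ico p q, f t = S q - S p := by
  have key : ∀ (n : ℕ) (p : ℤ), ∑ t ∈ Finset.Ico p (p + n), f t = S (p + n) - S p := by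
    intro n
    induction n with
    | zero => intro p; simp
    | succ n ih =>
      intro p
      have h1 : (p + ((n + 1 : ℕ) : ℤ)) = (p + (n : ℤ)) + 1 := by push_cast; ring
      have h2 : p ≤ p + (n : ℤ) := by
        have := Int.natCast_nonneg n; omega
      have hins : Finset.Ico p (p + (n : ℤ) + 1) = insert (p + (n : ℤ)) (Finset.Ico p (p + (n : ℤ))) := by
        ext t
        simp only [Finset.mem_Ico, Finset.mem_insert]
        omega
      rw [h1, hins, Finset.sum_insert (by simp [Finset.mem_Ico]), ih, hS]
      ring
  intro p q hpq
  obtain ⟨n, hn⟩ : ∃ n : ℕ, q = p + n := ⟨(q - p).toNat, by omega⟩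
  subst hn
  exact key _ p

section Glider

variable {vm vp : ℤ} (hvm : vm < 0) (hvp : 0 ≤ vp)
variable {a : ℤ → ℤ} (ha : ∀ k, a k = -1 ∨ a k = 0 ∨ a k = 1)
variable {M : ℤ → ℤ} (hM : ∀ k, M (k + 1) = M k + a k)

include hvm hvp ha hM

lemma cond1_iff (j : ℤ) :
    (a (j - vp) = 1 ∧ (∀ N : ℤ, N ≤ -vm → 0 ≤ ∑ t ∈ Finset.Icc (-vp + 1) N, a (j + t))) ↔
      ∀ i ∈ Finset.Icc (j - vp + 1) (j - vm + 1), M (j - vp) < M i := by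
  have hsum : ∀ p q : ℤ, p ≤ q → ∑ t ∈ Finset.Ico p q, a (j + t) = M (j + q) - M (j + p) := by
    intro p q hpq
    exact sum_Ico_eq (fun t => a (j + t)) (fun t => M (j + t))
      (fun t => by
        show M (j + (t + 1)) = M (j + t) + a (j + t)
        rw [show j + (t + 1) = (j + t) + 1 from by ring]; exact hM (j + t)) hpq
  have hMstep : M (j - vp + 1) = M (j - vp) + a (j - vp) := by
    have := hM (j - vp); exact this
  constructor
  · rintro ⟨hA, hN⟩ i hi
    rw [Finset.mem_Icc] at hi
    have hi1 : M (j - vp + 1) ≤ M i := by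
      rcases eq_or_lt_of_le hi.1 with h | h
      · rw [← h]
      · have hN' := hN (i - j - 1) (by omega)
        rw [int_Icc_eq_Ico, show i - j - 1 + 1 = i - j from by ring,
          hsum _ _ (by omega)] at hN'
        rw [show j + (i - j) = i from by ring, show j + (-vp + 1) = j - vp + 1 from by ring] at hN'
        omega
    omega
  · intro hR
    have hA : a (j - vp) = 1 := by
      have h1 := hR (j - vp + 1) (Finset.mem_Icc.2 (by omega))
      rcases ha (j - vp) with h | h | h <;> omega
    refine ⟨hA, fun N hN => ?_⟩
    by_cases hc : -vp ≤ N
    · rw [int_Icc_eq_Ico, hsum _ _ (by omega)]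
      have h1 := hR (j + N + 1) (Finset.mem_Icc.2 (by omega))
      rw [show j + (N + 1) = j + N + 1 from by ring, show j + (-vp + 1) = j - vp + 1 from by ring]
      omega
    · rw [Finset.Icc_eq_empty (by omega)]
      simp

lemma cond2_iff (j : ℤ) :
    (a (j - vm) = -1 ∧ (∀ N : ℤ, -vp ≤ N → (∑ t ∈ Finset.Icc N (-vm - 1), a (j + t)) ≤ 0)) ↔
      ∀ i ∈ Finset.Icc (j - vp) (j - vm), M (j - vm + 1) < M i := by
  have hsum : ∀ p q : ℤ, p ≤ q → ∑ t ∈ Finset.Ico p q, a (j + t) = M (j + q) - M (j + p) := by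
    intro p q hpq
    exact sum_Ico_eq (fun t => a (j + t)) (fun t => M (j + t))
      (fun t => by
        show M (j + (t + 1)) = M (j + t) + a (j + t)
        rw [show j + (t + 1) = (j + t) + 1 from by ring]; exact hM (j + t)) hpq
  have hMstep : M (j - vm + 1) = M (j - vm) + a (j - vm) := hM (j - vm)
  constructor
  · rintro ⟨hA, hN⟩ i hi
    rw [Finset.mem_Icc] at hi
    have hi1 : M (j - vm) ≤ M i := by
      rcases eq_or_lt_of_le hi.2 with h | h
      · rw [h]
      · have hN' := hN (i - j) (by omega)
        rw [int_Icc_eq_Ico, show -vm - 1 + 1 = -vm from by ring,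
          hsum _ _ (by omega)] at hN'
        rw [show j + -vm = j - vm from by ring, show j + (i - j) = i from by ring] at hN'
        omega
    omega
  · intro hR
    have hA : a (j - vm) = -1 := by
      have h1 := hR (j - vm) (Finset.mem_Icc.2 (by omega))
      rcases ha (j - vm) with h | h | h <;> omega
    refine ⟨hA, fun N hN => ?_⟩
    by_cases hc : N ≤ -vm - 1
    · rw [int_Icc_eq_Ico, show -vm - 1 + 1 = -vm from by ring, hsum _ _ (by omega)]
      have h1 := hR (j + N) (Finset.mem_Icc.2 (by omega))
      rw [show j + -vm = j - vm from by ring]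
      omega
    · rw [Finset.Icc_eq_empty (by omega)]
      simp

lemma glider_eq_one_iff (j : ℤ) :
    glider vm vp a j = 1 ↔ ∀ i ∈ Finset.Icc (j - vp + 1) (j - vm + 1), M (j - vp) < M i := by
  rw [← cond1_iff hvm hvp ha hM j]
  unfold glider
  split_ifs with h1 h2
  · exact iff_of_true rfl h1
  · exact iff_of_false (by norm_num) h1
  · exact iff_of_false (by norm_num) h1

lemma glider_eq_neg_one_iff (j : ℤ) :
    glider vm vp a j = -1 ↔ ∀ i ∈ Finset.Icc (j - vp) (j - vm), M (j - vm + 1) < M i := by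
  have hexcl : (∀ i ∈ Finset.Icc (j - vp + 1) (j - vm + 1), M (j - vp) < M i) →
      (∀ i ∈ Finset.Icc (j - vp) (j - vm), M (j - vm + 1) < M i) → False := by
    intro h1 h2
    have e1 := h1 (j - vm + 1) (Finset.mem_Icc.2 (by omega))
    have e2 := h2 (j - vp) (Finset.mem_Icc.2 (by omega))
    omega
  rw [← cond2_iff hvm hvp ha hM j]
  unfold glider
  split_ifs with h1 h2
  · exact iff_of_false (by norm_num)
      (fun h2 => hexcl ((cond1_iff hvm hvp ha hM j).1 h1) ((cond2_iff hvm hvp ha hM j).1 h2))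
  · exact iff_of_true rfl h2
  · exact iff_of_false (by norm_num) h2

end Glider

lemma glider_mem (vm vp : ℤ) (a : ℤ → ℤ) (x : ℤ) :
    glider vm vp a x = -1 ∨ glider vm vp a x = 0 ∨ glider vm vp a x = 1 := by
  unfold glider
  split_ifs <;> simp

noncomputable def mwin (vm vp : ℤ) (M : ℤ → ℤ) (x : ℤ) : ℤ :=
  if h : (Finset.Icc (x - vp) (x - vm)).Nonempty then (Finset.Icc (x - vp) (x - vm)).inf' h M
  else 0

lemma mwin_le {vm vp : ℤ} (M : ℤ → ℤ) {x b : ℤ} (h1 : x - vp ≤ b) (h2 : b ≤ x - vm) :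
    mwin vm vp M x ≤ M b := by
  have hb : b ∈ Finset.Icc (x - vp) (x - vm) := Finset.mem_Icc.2 ⟨h1, h2⟩
  rw [mwin, dif_pos ⟨b, hb⟩]
  exact Finset.inf'_le _ hb

lemma le_mwin {vm vp : ℤ} (h : vm ≤ vp) (M : ℤ → ℤ) {x c : ℤ}
    (H : ∀ b, x - vp ≤ b → b ≤ x - vm → c ≤ M b) : c ≤ mwin vm vp M x := by
  have hne : (Finset.Icc (x - vp) (x - vm)).Nonempty := Finset.nonempty_Icc.2 (by omega)
  rw [mwin, dif_pos hne]
  exact Finset.le_inf' _ _ (fun b hb => H b (Finset.mem_Icc.1 hb).1 (Finset.mem_Icc.1 hb).2)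

lemma mwin_exists {vm vp : ℤ} (h : vm ≤ vp) (M : ℤ → ℤ) (x : ℤ) :
    ∃ p, x - vp ≤ p ∧ p ≤ x - vm ∧ mwin vm vp M x = M p := by
  have hne : (Finset.Icc (x - vp) (x - vm)).Nonempty := Finset.nonempty_Icc.2 (by omega)
  rw [mwin, dif_pos hne]
  obtain ⟨p, hp, he⟩ := Finset.exists_mem_eq_inf' hne M
  exact ⟨p, (Finset.mem_Icc.1 hp).1, (Finset.mem_Icc.1 hp).2, he⟩

lemma mwin_step {vm vp : ℤ} (hvm : vm < 0) (hvp : 0 ≤ vp)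
    {a : ℤ → ℤ} (ha : ∀ k, a k = -1 ∨ a k = 0 ∨ a k = 1)
    {M : ℤ → ℤ} (hM : ∀ k, M (k + 1) = M k + a k) (j : ℤ) :
    mwin vm vp M (j + 1) = mwin vm vp M j + glider vm vp a j := by
  have hle : vm ≤ vp := by omega
  rcases glider_mem vm vp a j with hg | hg | hg
  · -- glider = -1
    rw [hg]
    have hR := (glider_eq_neg_one_iff hvm hvp ha hM j).1 hg
    have h1 : ∀ i, j - vp ≤ i → i ≤ j - vm → M (j - vm + 1) < M i := by
      intro i hi1 hi2; exact hR i (Finset.mem_Icc.2 ⟨hi1, hi2⟩)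
    have hstep : M (j - vm + 1) = M (j - vm) + a (j - vm) := hM (j - vm)
    have ha' := ha (j - vm)
    -- old window value
    have hold_ge : M (j - vm + 1) + 1 ≤ mwin vm vp M j :=
      le_mwin hle M (fun b hb1 hb2 => by have := h1 b hb1 hb2; omega)
    have hold_le : mwin vm vp M j ≤ M (j - vm) := mwin_le M (by omega) (by omega)
    -- new window value
    have hnew_le : mwin vm vp M (j + 1) ≤ M (j + 1 - vm) := mwin_le M (by omega) (by omega)
    have hnew_ge : M (j - vm + 1) ≤ mwin vm vp M (j + 1) := by
      apply le_mwin hle M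
      intro b hb1 hb2
      rcases eq_or_lt_of_le hb2 with h | h
      · rw [h, show j + 1 - vm = j - vm + 1 from by ring]
      · have := h1 b (by omega) (by omega); omega
    rw [show j + 1 - vm = j - vm + 1 from by ring] at hnew_le
    omega
  · -- glider = 0
    rw [hg]
    have hn1 : ¬ ∀ i ∈ Finset.Icc (j - vp + 1) (j - vm + 1), M (j - vp) < M i := by
      intro h; have := (glider_eq_one_iff hvm hvp ha hM j).2 h; omega
    have hn2 : ¬ ∀ i ∈ Finset.Icc (j - vp) (j - vm), M (j - vm + 1) < M i := by
      intro h; have := (glider_eq_neg_one_iff hvm hvp ha hM j).2 h; omega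
    push_neg at hn1 hn2
    obtain ⟨i0, hi0m, hi0⟩ := hn1
    obtain ⟨i1, hi1m, hi1⟩ := hn2
    rw [Finset.mem_Icc] at hi0m hi1m
    have hge : mwin vm vp M j ≤ mwin vm vp M (j + 1) := by
      apply le_mwin hle M
      intro b hb1 hb2
      rcases eq_or_lt_of_le hb2 with h | h
      · have h1 : mwin vm vp M j ≤ M i1 := mwin_le M (by omega) (by omega)
        rw [h, show j + 1 - vm = j - vm + 1 from by ring]
        omega
      · exact mwin_le M (by omega) (by omega)
    have hle' : mwin vm vp M (j + 1) ≤ mwin vm vp M j := by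
      obtain ⟨p, hp1, hp2, hpe⟩ := mwin_exists hle M j
      rcases eq_or_lt_of_le hp1 with h | h
      · have h2 : mwin vm vp M (j + 1) ≤ M i0 := mwin_le M (by omega) (by omega)
        rw [← h] at hpe
        omega
      · have h2 : mwin vm vp M (j + 1) ≤ M p := mwin_le M (by omega) (by omega)
        omega
    omega
  · -- glider = 1
    rw [hg]
    have hR := (glider_eq_one_iff hvm hvp ha hM j).1 hg
    have h1 : ∀ i, j - vp + 1 ≤ i → i ≤ j - vm + 1 → M (j - vp) < M i := by
      intro i hi1 hi2; exact hR i (Finset.mem_Icc.2 ⟨hi1, hi2⟩)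
    have hstep : M (j - vp + 1) = M (j - vp) + a (j - vp) := hM (j - vp)
    have ha' := ha (j - vp)
    have hold_le : mwin vm vp M j ≤ M (j - vp) := mwin_le M (by omega) (by omega)
    have hold_ge : M (j - vp) ≤ mwin vm vp M j := by
      apply le_mwin hle M
      intro b hb1 hb2
      rcases eq_or_lt_of_le hb1 with h | h
      · rw [← h]
      · have := h1 b (by omega) (by omega); omega
    have hnew_ge : M (j - vp) + 1 ≤ mwin vm vp M (j + 1) := by
      apply le_mwin hle M
      intro b hb1 hb2
      have := h1 b (by omega) (by omega); omega
    have hnew_le : mwin vm vp M (j + 1) ≤ M (j + 1 - vp) := mwin_le M (by omega) (by omega)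
    rw [show j + 1 - vp = j - vp + 1 from by ring] at hnew_le
    omega

lemma window_iff {vm vp : ℤ} (hvm : vm < 0) (hvp : 0 ≤ vp) (M : ℤ → ℤ) {x y : ℤ} (hxy : x ≤ y) :
    (∀ i ∈ Finset.Icc (x + 1) (y + 1), mwin vm vp M x < mwin vm vp M i) ↔
      ∀ i ∈ Finset.Icc (x - vp + 1) (y - vm + 1), M (x - vp) < M i := by
  have hle : vm ≤ vp := by omega
  constructor
  · intro h i' hi'
    rw [Finset.mem_Icc] at hi'
    have hx : mwin vm vp M x = M (x - vp) := by
      obtain ⟨p, hp1, hp2, hpe⟩ := mwin_exists hle M x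
      rcases eq_or_lt_of_le hp1 with hpp | hpp
      · rw [hpe, hpp]
      · exfalso
        set i := max (p + vm) (x + 1) with hi
        have him : i ∈ Finset.Icc (x + 1) (y + 1) := Finset.mem_Icc.2 (by omega)
        have h2 : mwin vm vp M i ≤ M p := mwin_le M (by omega) (by omega)
        have h3 := h i him
        omega
    set i := max (i' + vm) (x + 1) with hi
    have him : i ∈ Finset.Icc (x + 1) (y + 1) := Finset.mem_Icc.2 (by omega)
    have h2 : mwin vm vp M i ≤ M i' := mwin_le M (by omega) (by omega)
    have h3 := h i him
    omega
  · intro h i hi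
    rw [Finset.mem_Icc] at hi
    have h1 : mwin vm vp M x ≤ M (x - vp) := mwin_le M (by omega) (by omega)
    obtain ⟨p, hp1, hp2, hpe⟩ := mwin_exists hle M i
    have h2 := h p (Finset.mem_Icc.2 (by omega))
    omega

theorem stmt4 (vm vp : ℤ) (hvm : vm < 0) (hvp : 0 ≤ vp)
    (a : ℤ → ℤ) (ha : ∀ k, a k = -1 ∨ a k = 0 ∨ a k = 1)
    (M : ℤ → ℤ) (hM0 : M 0 = 0) (hM : ∀ k, M (k + 1) = M k + a k)
    (j : ℤ) (k : ℕ) :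
    (glider vm vp)^[k] a j = 1 ↔
      ∀ i ∈ Finset.Icc (j - vp * k + 1) (j - vm * k + 1), M (j - vp * k) < M i := by
  induction k generalizing a M j with
  | zero =>
    simp only [Function.iterate_zero, id_eq, Nat.cast_zero, mul_zero, sub_zero]
    have hstep : M (j + 1) = M j + a j := hM j
    constructor
    · intro h i hi
      rw [Finset.mem_Icc] at hi
      have : i = j + 1 := by omega
      rw [this]
      omega
    · intro h
      have := h (j + 1) (Finset.mem_Icc.2 (by omega))
      rcases ha j with h' | h' | h' <;> omega
  | succ k ih =>
    rw [Function.iterate_succ_apply]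
    set b := glider vm vp a with hb
    set Mb : ℤ → ℤ := fun x => mwin vm vp M x - mwin vm vp M 0 with hMb
    have hb_mem : ∀ x, b x = -1 ∨ b x = 0 ∨ b x = 1 := glider_mem vm vp a
    have hMb0 : Mb 0 = 0 := sub_self _
    have hMbstep : ∀ x, Mb (x + 1) = Mb x + b x := by
      intro x
      have := mwin_step hvm hvp ha hM x
      simp only [hMb, hb]
      omega
    rw [ih b hb_mem Mb hMb0 hMbstep j]
    have hk0 : (0 : ℤ) ≤ (k : ℤ) := Int.natCast_nonneg k
    have hxy : j - vp * (k : ℤ) ≤ j - vm * (k : ℤ) := by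
      have : vm * (k : ℤ) ≤ vp * (k : ℤ) :=
        mul_le_mul_of_nonneg_right (by omega) hk0
      omega
    have W := window_iff hvm hvp M hxy
    push_cast
    rw [show j - vp * ((k : ℤ) + 1) = j - vp * (k : ℤ) - vp from by ring,
      show j - vm * ((k : ℤ) + 1) = j - vm * (k : ℤ) - vm from by ring]
    simp only [hMb, sub_lt_sub_iff_right]
    exact W
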